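/- arXiv:2403.11191 — 7 statements merged into one kernel-verified Lean document; each statement's English description precedes it below -/
import Mathlib

section
/- Let N be a natural number and let (x,y) ∈ ℤ² satisfy x² + y² = 8N + 5. Then: (1) the eight points of the D8-orbit of (x,y) are pairwise distinct (so the dihedral group of order 8 acts freely on the solution set of x² + y² = 8N + 5); and (2) the D8-orbit of (x,y) contains exactly one point of the form (4β₁ − 2, 4β₂ − 1) with β₁, β₂ ∈ ℤ and β₁ + β₂ even. -/
lemma key_8N5 (N : ℕ) (x y : ℤ) (h : x ^ 2 + y ^ 2 = 8 * (N : ℤ) + 5) :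
    (x % 2 = 1 ∧ y % 4 = 2) ∨ (x % 4 = 2 ∧ y % 2 = 1) := by
  obtain ⟨a, r, rfl, hr0, hr4⟩ : ∃ a r, x = 4 * a + r ∧ 0 ≤ r ∧ r < 4 :=
    ⟨x / 4, x % 4, by omega, by omega, by omega⟩
  obtain ⟨b, s, rfl, hs0, hs4⟩ : ∃ b s, y = 4 * b + s ∧ 0 ≤ s ∧ s < 4 :=
    ⟨y / 4, y % 4, by omega, by omega, by omega⟩
  have h' : 16 * (a * a) + 8 * (a * r) + r * r + 16 * (b * b) + 8 * (b * s) + s * s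
      = 8 * (N : ℤ) + 5 := by linear_combination h
  obtain ⟨A, hA⟩ : ∃ A, a * a = A := ⟨_, rfl⟩
  obtain ⟨B, hB⟩ : ∃ B, b * b = B := ⟨_, rfl⟩
  rw [hA, hB] at h'
  interval_cases r <;> interval_cases s <;> omega

lemma pick_8N5 (x y : ℤ) (hx : x % 4 = 2) (hy : y % 2 = 1) :
    ∃! p : ℤ × ℤ,
      p ∈ ({(x, y), (x, -y), (-x, y), (-x, -y)} : Set (ℤ × ℤ)) ∧
        ∃ β₁ β₂ : ℤ, p = (4 * β₁ - 2, 4 * β₂ - 1) ∧ Even (β₁ + β₂) := by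
  obtain ⟨v, hv1, hv3⟩ : ∃ v, (v = y ∨ v = -y) ∧ v % 4 = 3 := by
    rcases (by omega : y % 4 = 1 ∨ y % 4 = 3) with h | h
    · exact ⟨-y, Or.inr rfl, by omega⟩
    · exact ⟨y, Or.inl rfl, by omega⟩
  obtain ⟨u, hu1, hu2, hu8⟩ : ∃ u, (u = x ∨ u = -x) ∧ u % 4 = 2 ∧ (u + v + 3) % 8 = 0 := by
    by_cases h8 : (x + v + 3) % 8 = 0
    · exact ⟨x, Or.inl rfl, hx, h8⟩
    · exact ⟨-x, Or.inr rfl, by omega, by omega⟩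
  refine ⟨(u, v), ⟨?_, (u + 2) / 4, (v + 1) / 4, ?_, ?_⟩, ?_⟩
  · rcases hu1 with rfl | rfl <;> rcases hv1 with rfl | rfl <;> simp
  · rw [Prod.mk.injEq]; omega
  · rw [Int.even_iff]; omega
  · rintro ⟨p1, p2⟩ ⟨hp, β₁, β₂, hpe, hev⟩
    simp only [Set.mem_insert_iff, Set.mem_singleton_iff, Prod.mk.injEq] at hp
    rw [Prod.mk.injEq] at hpe
    rw [Int.even_iff] at hev
    rw [Prod.mk.injEq]
    omega

/-- **Theorem (type C₂⁽¹⁾, equation x² + y² = 8N + 5).**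
For any integer solution (x,y) of x² + y² = 8N + 5:
(1) the eight points of its D8-orbit are pairwise distinct, and
(2) the D8-orbit contains exactly one point of the form (4β₁ − 2, 4β₂ − 1)
with β₁ + β₂ even. -/
theorem solutions_8N5_D8_free_and_unique_rep (N : ℕ) (x y : ℤ)
    (h : x ^ 2 + y ^ 2 = 8 * (N : ℤ) + 5) :
    (([(x, y), (x, -y), (-x, y), (-x, -y), (y, x), (y, -x), (-y, x), (-y, -x)] :
        List (ℤ × ℤ)).Nodup) ∧
    (∃! p : ℤ × ℤ,
      p ∈ ({(x, y), (x, -y), (-x, y), (-x, -y), (y, x), (y, -x), (-y, x), (-y, -x)} :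
          Set (ℤ × ℤ)) ∧
        ∃ β₁ β₂ : ℤ, p = (4 * β₁ - 2, 4 * β₂ - 1) ∧ Even (β₁ + β₂)) := by
  have hm := key_8N5 N x y h
  constructor
  · simp only [List.nodup_cons, List.mem_cons, List.mem_singleton, List.not_mem_nil,
      List.nodup_nil, or_false, and_true, true_and, not_false_eq_true, Prod.mk.injEq, not_or]
    omega
  · rcases hm with ⟨hx1, hy2⟩ | ⟨hx2, hy1⟩
    · obtain ⟨p, ⟨hpmem, hform⟩, huniq⟩ := pick_8N5 y x hy2 hx1
      refine ⟨p, ⟨?_, hform⟩, ?_⟩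
      · simp only [Set.mem_insert_iff, Set.mem_singleton_iff] at hpmem ⊢
        tauto
      · rintro ⟨q1, q2⟩ ⟨hq, β₁, β₂, hqe, hev⟩
        apply huniq
        refine ⟨?_, β₁, β₂, hqe, hev⟩
        simp only [Set.mem_insert_iff, Set.mem_singleton_iff, Prod.mk.injEq] at hq ⊢
        rw [Prod.mk.injEq] at hqe
        omega
    · obtain ⟨p, ⟨hpmem, hform⟩, huniq⟩ := pick_8N5 x y hx2 hy1
      refine ⟨p, ⟨?_, hform⟩, ?_⟩
      · simp only [Set.mem_insert_iff, Set.mem_singleton_iff] at hpmem ⊢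
        tauto
      · rintro ⟨q1, q2⟩ ⟨hq, β₁, β₂, hqe, hev⟩
        apply huniq
        refine ⟨?_, β₁, β₂, hqe, hev⟩
        simp only [Set.mem_insert_iff, Set.mem_singleton_iff, Prod.mk.injEq] at hq ⊢
        rw [Prod.mk.injEq] at hqe
        omega
end

section
/- Let N be a natural number and let (x,y) ∈ ℤ² satisfy x² + y² = 8N + 1. Then: (1) the four points of the C4-orbit of (x,y) are pairwise distinct (so the cyclic group of order 4 acts freely on the solution set of x² + y² = 8N + 1); and (2) the C4-orbit of (x,y) contains exactly one point of the form (4q₁, 4q₂ + 1) with q₁, q₂ ∈ ℤ. -/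
lemma key_mod (x y N : ℤ) (h : x ^ 2 + y ^ 2 = 8 * N + 1) :
    (x % 4 = 0 ∧ (y % 4 = 1 ∨ y % 4 = 3)) ∨ ((x % 4 = 1 ∨ x % 4 = 3) ∧ y % 4 = 0) := by
  have h8 : (x ^ 2 + y ^ 2) % 8 = 1 := by rw [h]; omega
  have hx2 : x ^ 2 % 8 = (x % 8) ^ 2 % 8 := by rw [pow_two, pow_two, Int.mul_emod]
  have hy2 : y ^ 2 % 8 = (y % 8) ^ 2 % 8 := by rw [pow_two, pow_two, Int.mul_emod]
  have hadd : ((x % 8) ^ 2 + (y % 8) ^ 2) % 8 = 1 := by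
    rw [Int.add_emod, ← hx2, ← hy2, ← Int.add_emod]; exact h8
  have hxm : x % 8 % 4 = x % 4 := Int.emod_emod_of_dvd x (by norm_num)
  have hym : y % 8 % 4 = y % 4 := Int.emod_emod_of_dvd y (by norm_num)
  have ha0 : 0 ≤ x % 8 := Int.emod_nonneg x (by norm_num)
  have ha8 : x % 8 < 8 := Int.emod_lt_of_pos x (by norm_num)
  have hb0 : 0 ≤ y % 8 := Int.emod_nonneg y (by norm_num)
  have hb8 : y % 8 < 8 := Int.emod_lt_of_pos y (by norm_num)
  set a := x % 8 with haa
  set b := y % 8 with hbb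
  clear_value a b
  interval_cases a <;> interval_cases b <;> omega


/-- **Theorem (type C₂⁽¹⁾, equation x² + y² = 8N + 1).**
For any integer solution (x,y) of x² + y² = 8N + 1:
(1) the four points of its C4-orbit are pairwise distinct, and
(2) the C4-orbit contains exactly one point of the form (4q₁, 4q₂ + 1). -/
theorem solutions_8N1_C4_free_and_unique_rep (N : ℕ) (x y : ℤ)
    (h : x ^ 2 + y ^ 2 = 8 * (N : ℤ) + 1) :
    (([(x, y), (-y, x), (-x, -y), (y, -x)] : List (ℤ × ℤ)).Nodup) ∧
    (∃! p : ℤ × ℤ,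
      p ∈ ({(x, y), (-y, x), (-x, -y), (y, -x)} : Set (ℤ × ℤ)) ∧
        ∃ q₁ q₂ : ℤ, p = (4 * q₁, 4 * q₂ + 1)) := by
  have hk := key_mod x y N h
  have h0 : x ≠ 0 ∨ y ≠ 0 := by
    rcases hk with ⟨_, h1 | h1⟩ | ⟨h1 | h1, _⟩ <;> omega
  have hc : ∀ p : ℤ × ℤ, (∃ q₁ q₂ : ℤ, p = (4 * q₁, 4 * q₂ + 1)) ↔
      (p.1 % 4 = 0 ∧ p.2 % 4 = 1) := by
    rintro ⟨u, v⟩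
    constructor
    · rintro ⟨q₁, q₂, hq⟩
      simp only [Prod.mk.injEq] at hq
      constructor <;> omega
    · rintro ⟨h1, h2⟩
      exact ⟨u / 4, v / 4, by simp only [Prod.mk.injEq]; constructor <;> omega⟩
  constructor
  · simp only [List.nodup_cons, List.mem_cons, List.not_mem_nil, List.mem_singleton,
      List.nodup_nil, Prod.mk.injEq, not_or, or_false, and_true]
    exact ⟨⟨by omega, by omega, by omega⟩, ⟨by omega, by omega⟩, by omega, not_false⟩
  · have hmem : ∀ p : ℤ × ℤ,
        p ∈ ({(x, y), (-y, x), (-x, -y), (y, -x)} : Set (ℤ × ℤ)) ↔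
        (p = (x, y) ∨ p = (-y, x) ∨ p = (-x, -y) ∨ p = (y, -x)) := by
      intro p; simp [Set.mem_insert_iff]
    rcases hk with ⟨hx4, hy1 | hy3⟩ | ⟨hx1 | hx3, hy4⟩
    · refine ⟨(x, y), ⟨by simp, (hc _).mpr ⟨hx4, hy1⟩⟩, ?_⟩
      rintro p ⟨hp, hq⟩
      rw [hc] at hq
      rw [hmem] at hp
      rcases hp with rfl | rfl | rfl | rfl <;> simp_all <;> omega
    · refine ⟨(-x, -y), ⟨by simp, (hc _).mpr ⟨by omega, by omega⟩⟩, ?_⟩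
      rintro p ⟨hp, hq⟩
      rw [hc] at hq
      rw [hmem] at hp
      rcases hp with rfl | rfl | rfl | rfl <;> simp_all <;> omega
    · refine ⟨(-y, x), ⟨by simp, (hc _).mpr ⟨by omega, by omega⟩⟩, ?_⟩
      rintro p ⟨hp, hq⟩
      rw [hc] at hq
      rw [hmem] at hp
      rcases hp with rfl | rfl | rfl | rfl <;> simp_all <;> omega
    · refine ⟨(y, -x), ⟨by simp, (hc _).mpr ⟨by omega, by omega⟩⟩, ?_⟩
      rintro p ⟨hp, hq⟩
      rw [hc] at hq
      rw [hmem] at hp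
      rcases hp with rfl | rfl | rfl | rfl <;> simp_all <;> omega
end

section
/- Let N be a natural number and let (x,y) ∈ ℤ² satisfy x² + y² = 12N + 5. Then: (1) the eight points of the D8-orbit of (x,y) are pairwise distinct (so the dihedral group of order 8 acts freely on the solution set of x² + y² = 12N + 5); and (2) the D8-orbit of (x,y) contains exactly one point of the form (6β₁ − 2, 6β₂ − 1) with β₁, β₂ ∈ ℤ. -/
/-- **Theorem (type D₃⁽²⁾, equation x² + y² = 12N + 5).**
For any integer solution (x,y) of x² + y² = 12N + 5:
(1) the eight points of its D8-orbit are pairwise distinct, and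
(2) the D8-orbit contains exactly one point of the form (6β₁ − 2, 6β₂ − 1). -/
theorem solutions_12N5_D8_free_and_unique_rep (N : ℕ) (x y : ℤ)
    (h : x ^ 2 + y ^ 2 = 12 * (N : ℤ) + 5) :
    (([(x, y), (x, -y), (-x, y), (-x, -y), (y, x), (y, -x), (-y, x), (-y, -x)] :
        List (ℤ × ℤ)).Nodup) ∧
    (∃! p : ℤ × ℤ,
      p ∈ ({(x, y), (x, -y), (-x, y), (-x, -y), (y, x), (y, -x), (-y, x), (-y, -x)} :
          Set (ℤ × ℤ)) ∧
        ∃ β₁ β₂ : ℤ, p = (6 * β₁ - 2, 6 * β₂ - 1)) := by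
  have key : ∀ z : ℤ, z ^ 2 % 12 = (z % 6) ^ 2 % 12 := by
    intro z
    obtain ⟨a, ha⟩ : ∃ a, z % 6 = a := ⟨_, rfl⟩
    have h2 : z ^ 2 = 12 * (3 * (z / 6) ^ 2 + a * (z / 6)) + a ^ 2 := by
      have h1 : z = 6 * (z / 6) + a := by omega
      linear_combination (z + 6 * (z / 6) + a) * h1
    rw [ha]; omega
  have hxa := key x
  have hyb := key y
  obtain ⟨a, ha, ha0, ha6⟩ : ∃ a, x % 6 = a ∧ 0 ≤ a ∧ a < 6 := ⟨_, rfl, by omega, by omega⟩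
  obtain ⟨b, hb, hb0, hb6⟩ : ∃ b, y % 6 = b ∧ 0 ≤ b ∧ b < 6 := ⟨_, rfl, by omega, by omega⟩
  rw [ha] at hxa
  rw [hb] at hyb
  interval_cases a <;> interval_cases b <;> norm_num at hxa hyb <;> try omega
  · refine ⟨?_, ⟨(-y, -x), ⟨by simp, (-y + 2) / 6, (-x + 1) / 6,
        by rw [Prod.mk.injEq]; constructor <;> omega⟩, ?_⟩⟩
    · simp only [List.nodup_cons, List.mem_cons, List.not_mem_nil, List.mem_singleton, or_false,
        Prod.mk.injEq, not_or, List.nodup_nil, and_true]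
      push_neg
      repeat' first | omega | (intro _; omega) | constructor | trivial
    · rintro ⟨p1, p2⟩ ⟨hp, β₁, β₂, hpe⟩
      rw [Prod.mk.injEq] at hpe
      simp only [Set.mem_insert_iff, Set.mem_singleton_iff, Prod.mk.injEq] at hp
      rw [Prod.mk.injEq]
      omega
  · refine ⟨?_, ⟨(y, -x), ⟨by simp, (y + 2) / 6, (-x + 1) / 6,
        by rw [Prod.mk.injEq]; constructor <;> omega⟩, ?_⟩⟩
    · simp only [List.nodup_cons, List.mem_cons, List.not_mem_nil, List.mem_singleton, or_false,
        Prod.mk.injEq, not_or, List.nodup_nil, and_true]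
      push_neg
      repeat' first | omega | (intro _; omega) | constructor | trivial
    · rintro ⟨p1, p2⟩ ⟨hp, β₁, β₂, hpe⟩
      rw [Prod.mk.injEq] at hpe
      simp only [Set.mem_insert_iff, Set.mem_singleton_iff, Prod.mk.injEq] at hp
      rw [Prod.mk.injEq]
      omega
  · refine ⟨?_, ⟨(-x, -y), ⟨by simp, (-x + 2) / 6, (-y + 1) / 6,
        by rw [Prod.mk.injEq]; constructor <;> omega⟩, ?_⟩⟩
    · simp only [List.nodup_cons, List.mem_cons, List.not_mem_nil, List.mem_singleton, or_false,
        Prod.mk.injEq, not_or, List.nodup_nil, and_true]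
      push_neg
      repeat' first | omega | (intro _; omega) | constructor | trivial
    · rintro ⟨p1, p2⟩ ⟨hp, β₁, β₂, hpe⟩
      rw [Prod.mk.injEq] at hpe
      simp only [Set.mem_insert_iff, Set.mem_singleton_iff, Prod.mk.injEq] at hp
      rw [Prod.mk.injEq]
      omega
  · refine ⟨?_, ⟨(-x, y), ⟨by simp, (-x + 2) / 6, (y + 1) / 6,
        by rw [Prod.mk.injEq]; constructor <;> omega⟩, ?_⟩⟩
    · simp only [List.nodup_cons, List.mem_cons, List.not_mem_nil, List.mem_singleton, or_false,
        Prod.mk.injEq, not_or, List.nodup_nil, and_true]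
      push_neg
      repeat' first | omega | (intro _; omega) | constructor | trivial
    · rintro ⟨p1, p2⟩ ⟨hp, β₁, β₂, hpe⟩
      rw [Prod.mk.injEq] at hpe
      simp only [Set.mem_insert_iff, Set.mem_singleton_iff, Prod.mk.injEq] at hp
      rw [Prod.mk.injEq]
      omega
  · refine ⟨?_, ⟨(x, -y), ⟨by simp, (x + 2) / 6, (-y + 1) / 6,
        by rw [Prod.mk.injEq]; constructor <;> omega⟩, ?_⟩⟩
    · simp only [List.nodup_cons, List.mem_cons, List.not_mem_nil, List.mem_singleton, or_false,
        Prod.mk.injEq, not_or, List.nodup_nil, and_true]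
      push_neg
      repeat' first | omega | (intro _; omega) | constructor | trivial
    · rintro ⟨p1, p2⟩ ⟨hp, β₁, β₂, hpe⟩
      rw [Prod.mk.injEq] at hpe
      simp only [Set.mem_insert_iff, Set.mem_singleton_iff, Prod.mk.injEq] at hp
      rw [Prod.mk.injEq]
      omega
  · refine ⟨?_, ⟨(x, y), ⟨by simp, (x + 2) / 6, (y + 1) / 6,
        by rw [Prod.mk.injEq]; constructor <;> omega⟩, ?_⟩⟩
    · simp only [List.nodup_cons, List.mem_cons, List.not_mem_nil, List.mem_singleton, or_false,
        Prod.mk.injEq, not_or, List.nodup_nil, and_true]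
      push_neg
      repeat' first | omega | (intro _; omega) | constructor | trivial
    · rintro ⟨p1, p2⟩ ⟨hp, β₁, β₂, hpe⟩
      rw [Prod.mk.injEq] at hpe
      simp only [Set.mem_insert_iff, Set.mem_singleton_iff, Prod.mk.injEq] at hp
      rw [Prod.mk.injEq]
      omega
  · refine ⟨?_, ⟨(-y, x), ⟨by simp, (-y + 2) / 6, (x + 1) / 6,
        by rw [Prod.mk.injEq]; constructor <;> omega⟩, ?_⟩⟩
    · simp only [List.nodup_cons, List.mem_cons, List.not_mem_nil, List.mem_singleton, or_false,
        Prod.mk.injEq, not_or, List.nodup_nil, and_true]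
      push_neg
      repeat' first | omega | (intro _; omega) | constructor | trivial
    · rintro ⟨p1, p2⟩ ⟨hp, β₁, β₂, hpe⟩
      rw [Prod.mk.injEq] at hpe
      simp only [Set.mem_insert_iff, Set.mem_singleton_iff, Prod.mk.injEq] at hp
      rw [Prod.mk.injEq]
      omega
  · refine ⟨?_, ⟨(y, x), ⟨by simp, (y + 2) / 6, (x + 1) / 6,
        by rw [Prod.mk.injEq]; constructor <;> omega⟩, ?_⟩⟩
    · simp only [List.nodup_cons, List.mem_cons, List.not_mem_nil, List.mem_singleton, or_false,
        Prod.mk.injEq, not_or, List.nodup_nil, and_true]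
      push_neg
      repeat' first | omega | (intro _; omega) | constructor | trivial
    · rintro ⟨p1, p2⟩ ⟨hp, β₁, β₂, hpe⟩
      rw [Prod.mk.injEq] at hpe
      simp only [Set.mem_insert_iff, Set.mem_singleton_iff, Prod.mk.injEq] at hp
      rw [Prod.mk.injEq]
      omega
end

section
/- Let N be a natural number and let (x,y) ∈ ℤ² satisfy x² + 3y² = 12N + 7. Then: (1) the four points of the V4-orbit of (x,y) are pairwise distinct (so the Klein four-group acts freely on the solution set of x² + 3y² = 12N + 7); and (2) the V4-orbit of (x,y) contains exactly one point of the form (6β₂ + 2, 4β₁ + 2β₂ + 1) with β₁, β₂ ∈ ℤ. -/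
theorem uniq_aux (x y u v : ℤ) (hu : u = x ∨ u = -x) (hv : v = y ∨ v = -y)
    (h6 : u % 6 = 2) (h12 : (u + 1 - 3 * v) % 12 = 0) (hy : y % 2 = 1) (hx3 : x % 3 ≠ 0) :
    ∃! p : ℤ × ℤ,
      p ∈ ({(x, y), (-x, y), (x, -y), (-x, -y)} : Set (ℤ × ℤ)) ∧
        ∃ β₁ β₂ : ℤ, p = (6 * β₂ + 2, 4 * β₁ + 2 * β₂ + 1) := by
  refine ⟨(u, v), ⟨?_, (v - 2 * ((u - 2) / 6) - 1) / 4, (u - 2) / 6, ?_⟩, ?_⟩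
  · rcases hu with rfl | rfl <;> rcases hv with rfl | rfl <;> simp
  · simp only [Prod.mk.injEq]
    constructor <;> omega
  · rintro ⟨a, b⟩ ⟨hmem, β₁, β₂, heq⟩
    simp only [Set.mem_insert_iff, Set.mem_singleton_iff, Prod.mk.injEq] at hmem ⊢
    simp only [Prod.mk.injEq] at heq
    obtain ⟨ha, hb⟩ := heq
    rcases hu with rfl | rfl <;> rcases hv with rfl | rfl <;>
      rcases hmem with ⟨rfl, rfl⟩ | ⟨rfl, rfl⟩ | ⟨rfl, rfl⟩ | ⟨rfl, rfl⟩ <;> omega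

theorem mods (N x y : ℤ) (h : x ^ 2 + 3 * y ^ 2 = 12 * N + 7) :
    (x % 4 = 0 ∨ x % 4 = 2) ∧ y % 2 = 1 ∧ x % 3 ≠ 0 := by
  have h4 : ((x : ZMod 4))^2 + 3 * (y : ZMod 4)^2 = 3 := by
    have := congrArg (fun t : ℤ => (t : ZMod 4)) h
    push_cast at this
    rw [this, show (12 : ZMod 4) = 0 by decide, show (7 : ZMod 4) = 3 by decide]
    ring
  have h3 : ((x : ZMod 3))^2 = 1 := by
    have := congrArg (fun t : ℤ => (t : ZMod 3)) h
    push_cast at this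
    rw [show (3 : ZMod 3) = 0 by decide, show (12 : ZMod 3) = 0 by decide,
      show (7 : ZMod 3) = 1 by decide] at this
    simpa using this
  have key4 := (by decide : ∀ a b : ZMod 4, a^2 + 3*b^2 = 3 → (a = 0 ∨ a = 2) ∧ (b = 1 ∨ b = 3))
    (x : ZMod 4) (y : ZMod 4) h4
  have key3 := (by decide : ∀ a : ZMod 3, a^2 = 1 → a = 1 ∨ a = 2) (x : ZMod 3) h3
  have cast4 : ∀ c : ℤ, (x : ZMod 4) = (c : ZMod 4) → (4:ℤ) ∣ c - x :=
    fun c hc => ((ZMod.intCast_eq_intCast_iff _ _ _).mp hc).dvd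
  have cast4y : ∀ c : ℤ, (y : ZMod 4) = (c : ZMod 4) → (4:ℤ) ∣ c - y :=
    fun c hc => ((ZMod.intCast_eq_intCast_iff _ _ _).mp hc).dvd
  have cast3 : ∀ c : ℤ, (x : ZMod 3) = (c : ZMod 3) → (3:ℤ) ∣ c - x :=
    fun c hc => ((ZMod.intCast_eq_intCast_iff _ _ _).mp hc).dvd
  have hx4 : (4:ℤ) ∣ 0 - x ∨ (4:ℤ) ∣ 2 - x := by
    rcases key4.1 with hc | hc
    · exact Or.inl (cast4 0 (by exact_mod_cast hc))
    · exact Or.inr (cast4 2 (by exact_mod_cast hc))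
  have hy4 : (4:ℤ) ∣ 1 - y ∨ (4:ℤ) ∣ 3 - y := by
    rcases key4.2 with hc | hc
    · exact Or.inl (cast4y 1 (by exact_mod_cast hc))
    · exact Or.inr (cast4y 3 (by exact_mod_cast hc))
  have hx3 : (3:ℤ) ∣ 1 - x ∨ (3:ℤ) ∣ 2 - x := by
    rcases key3 with hc | hc
    · exact Or.inl (cast3 1 (by exact_mod_cast hc))
    · exact Or.inr (cast3 2 (by exact_mod_cast hc))
  refine ⟨by omega, by omega, by omega⟩

/-- **Theorem (type D₄⁽³⁾, equation x² + 3y² = 12N + 7).**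
For any integer solution (x,y) of x² + 3y² = 12N + 7:
(1) the four points of its V4-orbit are pairwise distinct, and
(2) the V4-orbit contains exactly one point of the form (6β₂ + 2, 4β₁ + 2β₂ + 1). -/
theorem solutions_12N7_V4_free_and_unique_rep (N : ℕ) (x y : ℤ)
    (h : x ^ 2 + 3 * y ^ 2 = 12 * (N : ℤ) + 7) :
    (([(x, y), (-x, y), (x, -y), (-x, -y)] : List (ℤ × ℤ)).Nodup) ∧
    (∃! p : ℤ × ℤ,
      p ∈ ({(x, y), (-x, y), (x, -y), (-x, -y)} : Set (ℤ × ℤ)) ∧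
        ∃ β₁ β₂ : ℤ, p = (6 * β₂ + 2, 4 * β₁ + 2 * β₂ + 1)) := by
  obtain ⟨hx4, hy2, hx3⟩ := mods (N : ℤ) x y h
  constructor
  · simp only [List.nodup_cons, List.mem_cons, List.not_mem_nil, or_false,
      List.mem_singleton, List.nodup_nil, and_true, Prod.mk.injEq, not_or,
      true_and, not_false_eq_true]
    omega
  · -- choose u with u % 6 = 2
    have hu6 : x % 6 = 2 ∨ (-x) % 6 = 2 := by omega
    rcases hu6 with hu | hu
    · have hv : (x + 1 - 3 * y) % 12 = 0 ∨ (x + 1 - 3 * (-y)) % 12 = 0 := by omega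
      rcases hv with hv | hv
      · exact uniq_aux x y x y (Or.inl rfl) (Or.inl rfl) hu hv hy2 hx3
      · exact uniq_aux x y x (-y) (Or.inl rfl) (Or.inr rfl) hu hv hy2 hx3
    · have hv : (-x + 1 - 3 * y) % 12 = 0 ∨ (-x + 1 - 3 * (-y)) % 12 = 0 := by omega
      rcases hv with hv | hv
      · exact uniq_aux x y (-x) y (Or.inr rfl) (Or.inl rfl) hu hv hy2 hx3
      · exact uniq_aux x y (-x) (-y) (Or.inr rfl) (Or.inr rfl) hu hv hy2 hx3
end

section
/- Let N be a natural number and let (x,y) ∈ ℤ² satisfy x² + 3y² = 12N + 4. Then x ≡ y (mod 2), so that R(x,y) = ((x − 3y)/2, (x + y)/2) is again an integer point satisfying x² + 3y² = 12N + 4, and R has order 6. Moreover: (1) the six points Rᵏ(x,y) for 0 ≤ k ≤ 5 are pairwise distinct (so the cyclic group ⟨R⟩ of order 6 acts freely on the solution set); and (2) exactly one of the six points Rᵏ(x,y), 0 ≤ k ≤ 5, is of the form (3β₁ + 6β₂ − 1, 3β₁ − 1) with β₁, β₂ ∈ ℤ. -/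
/-- The rotation `R` of the plane with matrix `(1/2)[[1, −3], [1, 1]]`:
`R(x,y) = ((x − 3y)/2, (x + y)/2)`. It preserves the quadratic form `x² + 3y²`
and has order 6. -/
def Rrot : ℚ × ℚ → ℚ × ℚ := fun p => ((p.1 - 3 * p.2) / 2, (p.1 + p.2) / 2)

lemma R6id : Rrot^[6] = id := by
  funext p
  obtain ⟨a, b⟩ := p
  show Rrot (Rrot (Rrot (Rrot (Rrot (Rrot (a, b)))))) = (a, b)
  simp only [Rrot, Prod.mk.injEq]
  constructor <;> ring

lemma ptEq (a b c d : ℤ) :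
    (((a:ℤ):ℚ), ((b:ℤ):ℚ)) = (((c:ℤ):ℚ), ((d:ℤ):ℚ)) ↔ a = c ∧ b = d := by
  simp [Prod.ext_iff]

lemma orb1 (y t : ℤ) : Rrot^[1] (((y + 2*t : ℤ) : ℚ), ((y : ℤ) : ℚ)) =
    (((t - y : ℤ) : ℚ), ((y + t : ℤ) : ℚ)) := by
  simp only [Function.iterate_one, Rrot, Prod.mk.injEq]
  push_cast; constructor <;> ring

lemma orb2 (y t : ℤ) : Rrot^[2] (((y + 2*t : ℤ) : ℚ), ((y : ℤ) : ℚ)) =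
    (((-2*y - t : ℤ) : ℚ), ((t : ℤ) : ℚ)) := by
  rw [Function.iterate_succ_apply', orb1]
  simp only [Rrot, Prod.mk.injEq]; push_cast; constructor <;> ring

lemma orb3 (y t : ℤ) : Rrot^[3] (((y + 2*t : ℤ) : ℚ), ((y : ℤ) : ℚ)) =
    (((-y - 2*t : ℤ) : ℚ), ((-y : ℤ) : ℚ)) := by
  rw [Function.iterate_succ_apply', orb2]
  simp only [Rrot, Prod.mk.injEq]; push_cast; constructor <;> ring

lemma orb4 (y t : ℤ) : Rrot^[4] (((y + 2*t : ℤ) : ℚ), ((y : ℤ) : ℚ)) =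
    (((y - t : ℤ) : ℚ), ((-y - t : ℤ) : ℚ)) := by
  rw [Function.iterate_succ_apply', orb3]
  simp only [Rrot, Prod.mk.injEq]; push_cast; constructor <;> ring

lemma orb5 (y t : ℤ) : Rrot^[5] (((y + 2*t : ℤ) : ℚ), ((y : ℤ) : ℚ)) =
    (((2*y + t : ℤ) : ℚ), ((-t : ℤ) : ℚ)) := by
  rw [Function.iterate_succ_apply', orb4]
  simp only [Rrot, Prod.mk.injEq]; push_cast; constructor <;> ring

lemma orbit_int (N : ℕ) : ∀ (k : ℕ) (a b : ℤ), a % 2 = b % 2 →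
    a^2 + 3*b^2 = 12*(N:ℤ)+4 →
    ∃ a' b' : ℤ, Rrot^[k] ((a:ℚ), (b:ℚ)) = ((a':ℚ), (b':ℚ)) ∧ a' % 2 = b' % 2 ∧
      a'^2 + 3*b'^2 = 12*(N:ℤ)+4 := by
  intro k
  induction k with
  | zero => exact fun a b h1 h2 => ⟨a, b, rfl, h1, h2⟩
  | succ n ih =>
    intro a b h1 h2
    obtain ⟨c, hc⟩ : ∃ c, a - 3*b = 2*c := ⟨(a - 3*b)/2, by omega⟩
    obtain ⟨d, hd⟩ : ∃ d, a + b = 2*d := ⟨(a + b)/2, by omega⟩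
    have hc' : (a:ℚ) - 3*b = 2*c := by exact_mod_cast hc
    have hd' : (a:ℚ) + b = 2*d := by exact_mod_cast hd
    have hstep : Rrot ((a:ℚ), (b:ℚ)) = ((c:ℚ), (d:ℚ)) := by
      simp only [Rrot, Prod.mk.injEq]
      exact ⟨by linarith, by linarith⟩
    have hnorm : c^2 + 3*d^2 = 12*(N:ℤ)+4 := by
      have h4 : 4*(c^2 + 3*d^2) = 4*(12*(N:ℤ)+4) := by
        linear_combination (-(a - 3*b + 2*c))*hc - 3*(a + b + 2*d)*hd + 4*h2
      linarith
    obtain ⟨a', b', h1', h2', h3'⟩ := ih c d (by omega) hnorm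
    exact ⟨a', b', by rw [Function.iterate_succ_apply, hstep]; exact h1', h2', h3'⟩

/-- **Theorem (type A₂⁽¹⁾, equation x² + 3y² = 12N + 4).**
For any integer solution (x,y) of x² + 3y² = 12N + 4:
x ≡ y (mod 2), so each iterate Rᵏ(x,y) is again an integer solution, R⁶ = id,
(1) the six points Rᵏ(x,y), 0 ≤ k ≤ 5, are pairwise distinct, and
(2) exactly one of the six points Rᵏ(x,y) is of the form
(3β₁ + 6β₂ − 1, 3β₁ − 1) with β₁, β₂ ∈ ℤ. -/
theorem solutions_12N4_C6_free_and_unique_rep (N : ℕ) (x y : ℤ)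
    (h : x ^ 2 + 3 * y ^ 2 = 12 * (N : ℤ) + 4) :
    x % 2 = y % 2 ∧
    (∀ k : ℕ, ∃ a b : ℤ,
      Rrot^[k] ((x : ℚ), (y : ℚ)) = ((a : ℚ), (b : ℚ)) ∧
      a ^ 2 + 3 * b ^ 2 = 12 * (N : ℤ) + 4) ∧
    Rrot^[6] = id ∧
    (∀ k l : Fin 6,
      Rrot^[k.1] ((x : ℚ), (y : ℚ)) = Rrot^[l.1] ((x : ℚ), (y : ℚ)) → k = l) ∧
    (∃! k : Fin 6, ∃ β₁ β₂ : ℤ,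
      Rrot^[k.1] ((x : ℚ), (y : ℚ)) =
        (((3 * β₁ + 6 * β₂ - 1 : ℤ) : ℚ), ((3 * β₁ - 1 : ℤ) : ℚ))) := by
  have hpar : x % 2 = y % 2 := by
    obtain ⟨u, hu⟩ := Int.even_mul_succ_self x
    obtain ⟨v, hv⟩ := Int.even_mul_succ_self y
    have hu2 : x^2 + x = 2*u := by linear_combination hu
    have hv2 : y^2 + y = 2*v := by linear_combination hv
    have key : ∀ s s' : ℤ, s + 3*s' = 12*(N:ℤ)+4 → s + x = 2*u → s' + y = 2*v →
        x % 2 = y % 2 := by intro s s' k1 k2 k3; omega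
    exact key _ _ h (by linarith) (by linarith)
  have hx3 : x % 3 ≠ 0 := by
    intro h0
    obtain ⟨c, hc⟩ : ∃ c, x = 3*c := ⟨x/3, by omega⟩
    obtain ⟨m, hm⟩ : ∃ m : ℤ, 12*(N:ℤ)+4 = 3*m := ⟨3*c^2 + y^2, by rw [← h, hc]; ring⟩
    omega
  obtain ⟨t, ht⟩ : ∃ t, x = y + 2*t := ⟨(x - y)/2, by omega⟩
  subst ht
  have hne : y ≠ 0 ∨ t ≠ 0 := by
    by_contra hcon
    push_neg at hcon
    rw [hcon.1, hcon.2] at h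
    norm_num at h
    omega
  refine ⟨hpar, ?_, R6id, ?_, ?_⟩
  · intro k
    obtain ⟨a, b, he, _, hn⟩ := orbit_int N k (y + 2*t) y hpar h
    exact ⟨a, b, he, hn⟩
  · intro k l heq
    rcases k with ⟨j, hj⟩
    rcases l with ⟨m, hm⟩
    interval_cases j <;> interval_cases m <;>
      simp only [Fin.val_mk, Function.iterate_zero_apply, orb1, orb2, orb3, orb4, orb5,
        Prod.mk.injEq, Int.cast_inj, Fin.mk.injEq] at heq ⊢ <;> omega
  · have hyt : (y + 2*t) % 3 ≠ 0 := hx3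
    have e0 : (∃ β₁ β₂ : ℤ,
        Rrot^[0] (((y + 2*t : ℤ) : ℚ), ((y : ℤ) : ℚ)) =
          (((3 * β₁ + 6 * β₂ - 1 : ℤ) : ℚ), ((3 * β₁ - 1 : ℤ) : ℚ))) ↔
        (y % 3 = 2 ∧ t % 3 = 0) := by
      constructor
      · rintro ⟨β₁, β₂, hk⟩
        rw [Function.iterate_zero_apply, ptEq] at hk
        omega
      · rintro ⟨h1, h2⟩
        exact ⟨(y+1)/3, (2*t)/6, by rw [Function.iterate_zero_apply, ptEq]; omega⟩
    have e1 : (∃ β₁ β₂ : ℤ,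
        Rrot^[1] (((y + 2*t : ℤ) : ℚ), ((y : ℤ) : ℚ)) =
          (((3 * β₁ + 6 * β₂ - 1 : ℤ) : ℚ), ((3 * β₁ - 1 : ℤ) : ℚ))) ↔
        (y % 3 = 0 ∧ t % 3 = 2) := by
      constructor
      · rintro ⟨β₁, β₂, hk⟩
        rw [orb1, ptEq] at hk
        omega
      · rintro ⟨h1, h2⟩
        exact ⟨(y+t+1)/3, (-2*y)/6, by rw [orb1, ptEq]; omega⟩
    have e2 : (∃ β₁ β₂ : ℤ,
        Rrot^[2] (((y + 2*t : ℤ) : ℚ), ((y : ℤ) : ℚ)) =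
          (((3 * β₁ + 6 * β₂ - 1 : ℤ) : ℚ), ((3 * β₁ - 1 : ℤ) : ℚ))) ↔
        (y % 3 = 1 ∧ t % 3 = 2) := by
      constructor
      · rintro ⟨β₁, β₂, hk⟩
        rw [orb2, ptEq] at hk
        omega
      · rintro ⟨h1, h2⟩
        exact ⟨(t+1)/3, (-2*y-2*t)/6, by rw [orb2, ptEq]; omega⟩
    have e3 : (∃ β₁ β₂ : ℤ,
        Rrot^[3] (((y + 2*t : ℤ) : ℚ), ((y : ℤ) : ℚ)) =
          (((3 * β₁ + 6 * β₂ - 1 : ℤ) : ℚ), ((3 * β₁ - 1 : ℤ) : ℚ))) ↔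
        (y % 3 = 1 ∧ t % 3 = 0) := by
      constructor
      · rintro ⟨β₁, β₂, hk⟩
        rw [orb3, ptEq] at hk
        omega
      · rintro ⟨h1, h2⟩
        exact ⟨(-y+1)/3, (-2*t)/6, by rw [orb3, ptEq]; omega⟩
    have e4 : (∃ β₁ β₂ : ℤ,
        Rrot^[4] (((y + 2*t : ℤ) : ℚ), ((y : ℤ) : ℚ)) =
          (((3 * β₁ + 6 * β₂ - 1 : ℤ) : ℚ), ((3 * β₁ - 1 : ℤ) : ℚ))) ↔
        (y % 3 = 0 ∧ t % 3 = 1) := by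
      constructor
      · rintro ⟨β₁, β₂, hk⟩
        rw [orb4, ptEq] at hk
        omega
      · rintro ⟨h1, h2⟩
        exact ⟨(-y-t+1)/3, (2*y)/6, by rw [orb4, ptEq]; omega⟩
    have e5 : (∃ β₁ β₂ : ℤ,
        Rrot^[5] (((y + 2*t : ℤ) : ℚ), ((y : ℤ) : ℚ)) =
          (((3 * β₁ + 6 * β₂ - 1 : ℤ) : ℚ), ((3 * β₁ - 1 : ℤ) : ℚ))) ↔
        (y % 3 = 2 ∧ t % 3 = 1) := by
      constructor
      · rintro ⟨β₁, β₂, hk⟩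
        rw [orb5, ptEq] at hk
        omega
      · rintro ⟨h1, h2⟩
        exact ⟨(-t+1)/3, (2*y+2*t)/6, by rw [orb5, ptEq]; omega⟩
    have hy3 : y % 3 = 0 ∨ y % 3 = 1 ∨ y % 3 = 2 := by omega
    have ht3 : t % 3 = 0 ∨ t % 3 = 1 ∨ t % 3 = 2 := by omega
    rcases hy3 with hy | hy | hy <;> rcases ht3 with htt | htt | htt
    · exfalso; omega
    · refine ⟨⟨4, by norm_num⟩, e4.mpr ⟨hy, htt⟩, ?_⟩
      intro k hk
      rcases k with ⟨j, hj⟩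
      simp only [Fin.val_mk] at hk
      interval_cases j <;>
        [rw [e0] at hk; rw [e1] at hk; rw [e2] at hk; rw [e3] at hk;
         rw [e4] at hk; rw [e5] at hk] <;>
        simp only [Fin.mk.injEq] <;> omega
    · refine ⟨⟨1, by norm_num⟩, e1.mpr ⟨hy, htt⟩, ?_⟩
      intro k hk
      rcases k with ⟨j, hj⟩
      simp only [Fin.val_mk] at hk
      interval_cases j <;>
        [rw [e0] at hk; rw [e1] at hk; rw [e2] at hk; rw [e3] at hk;
         rw [e4] at hk; rw [e5] at hk] <;>
        simp only [Fin.mk.injEq] <;> omega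
    · refine ⟨⟨3, by norm_num⟩, e3.mpr ⟨hy, htt⟩, ?_⟩
      intro k hk
      rcases k with ⟨j, hj⟩
      simp only [Fin.val_mk] at hk
      interval_cases j <;>
        [rw [e0] at hk; rw [e1] at hk; rw [e2] at hk; rw [e3] at hk;
         rw [e4] at hk; rw [e5] at hk] <;>
        simp only [Fin.mk.injEq] <;> omega
    · exfalso; omega
    · refine ⟨⟨2, by norm_num⟩, e2.mpr ⟨hy, htt⟩, ?_⟩
      intro k hk
      rcases k with ⟨j, hj⟩
      simp only [Fin.val_mk] at hk
      interval_cases j <;>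
        [rw [e0] at hk; rw [e1] at hk; rw [e2] at hk; rw [e3] at hk;
         rw [e4] at hk; rw [e5] at hk] <;>
        simp only [Fin.mk.injEq] <;> omega
    · refine ⟨⟨0, by norm_num⟩, e0.mpr ⟨hy, htt⟩, ?_⟩
      intro k hk
      rcases k with ⟨j, hj⟩
      simp only [Fin.val_mk] at hk
      interval_cases j <;>
        [rw [e0] at hk; rw [e1] at hk; rw [e2] at hk; rw [e3] at hk;
         rw [e4] at hk; rw [e5] at hk] <;>
        simp only [Fin.mk.injEq] <;> omega
    · refine ⟨⟨5, by norm_num⟩, e5.mpr ⟨hy, htt⟩, ?_⟩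
      intro k hk
      rcases k with ⟨j, hj⟩
      simp only [Fin.val_mk] at hk
      interval_cases j <;>
        [rw [e0] at hk; rw [e1] at hk; rw [e2] at hk; rw [e3] at hk;
         rw [e4] at hk; rw [e5] at hk] <;>
        simp only [Fin.mk.injEq] <;> omega
    · exfalso; omega
end

section
/- Let a ≥ 1 and b, N be natural numbers, and suppose that for every integer x one has b ≢ x² (mod a) and b ≢ 2x² (mod a) (b is neither a quadratic residue nor twice a quadratic residue modulo a). Then for every (x,y) ∈ ℤ² with x² + y² = aN + b, the eight points of the D8-orbit of (x,y) are pairwise distinct; in particular the dihedral group of order 8 acts freely on the set of integer solutions of x² + y² = aN + b. -/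
/-- **Corollary (freeness of the D8-action on U(aN+b)).**
If b is neither a quadratic residue nor twice a quadratic residue modulo a,
then for every integer solution (x,y) of x² + y² = aN + b the eight points of
its D8-orbit are pairwise distinct: the dihedral group of order 8 acts freely
on the solution set. -/
theorem D8_free_of_nonresidue (a b N : ℕ) (ha : 1 ≤ a)
    (hb : ∀ x : ℤ, ¬ ((b : ℤ) ≡ x ^ 2 [ZMOD (a : ℤ)]) ∧
                   ¬ ((b : ℤ) ≡ 2 * x ^ 2 [ZMOD (a : ℤ)])) :
    ∀ x y : ℤ, x ^ 2 + y ^ 2 = (a : ℤ) * N + b →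
      (([(x, y), (x, -y), (-x, y), (-x, -y), (y, x), (y, -x), (-y, x), (-y, -x)] :
          List (ℤ × ℤ)).Nodup) := by
  intro x y h
  have hbxy : (b : ℤ) ≡ x ^ 2 + y ^ 2 [ZMOD (a : ℤ)] := by
    have : (a : ℤ) * N + b ≡ 0 * N + b [ZMOD (a : ℤ)] := by
      exact Int.ModEq.add_right _ (Int.ModEq.mul_right _ (Int.modEq_zero_iff_dvd.mpr dvd_rfl))
    simpa [h] using this.symm
  have hx0 : x ≠ 0 := by
    rintro rfl
    exact (hb y).1 (by simpa using hbxy)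
  have hy0 : y ≠ 0 := by
    rintro rfl
    exact (hb x).1 (by simpa using hbxy)
  have hxy : x ≠ y := by
    rintro rfl
    exact (hb x).2 (by have := hbxy; rw [show x ^ 2 + x ^ 2 = 2 * x ^ 2 by ring] at this; exact this)
  have hxny : x ≠ -y := by
    rintro rfl
    exact (hb y).2 (by have := hbxy; rw [show (-y) ^ 2 + y ^ 2 = 2 * y ^ 2 by ring] at this; exact this)
  simp [List.nodup_cons, Prod.ext_iff]
  refine ⟨?_, ?_, ?_, ?_, ?_, ?_, ?_⟩ <;> intros <;> omega
end

section
/- Let N be a natural number and let x, y, z be integers satisfying x² + 2y² + 3z² = 48N + 30. Then there exist integers x', z' with 2x' = x − 3z and 2z' = x + z, and these satisfy x'² + 2y² + 3z'² = 48N + 30. In other words, the linear map R(x,y,z) = ((x−3z)/2, y, (x+z)/2), as well as the reflection s(x,y,z) = (x,y,−z), send integer solutions with second coordinate y to integer solutions with the same second coordinate y; hence the group G = ⟨R, s⟩ stabilises the set of integer points of the slice X_{N,y} of the quadric x² + 2y² + 3z² = 48N + 30. -/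
/-- **Proposition (type A₃⁽¹⁾, stability of X_{N,y}(ℤ) under G = ⟨R, s⟩).**
For any integer solution (x,y,z) of x² + 2y² + 3z² = 48N + 30 there exist
integers x', z' with 2x' = x − 3z and 2z' = x + z, and (x', y, z') is again a
solution; moreover (x, y, −z) is a solution. Hence R(x,y,z) =
((x−3z)/2, y, (x+z)/2) and s(x,y,z) = (x,y,−z) stabilise the set of integer
points of the slice X_{N,y}. -/
theorem A31_R_and_s_stabilise_slice (N : ℕ) (x y z : ℤ)
    (h : x ^ 2 + 2 * y ^ 2 + 3 * z ^ 2 = 48 * (N : ℤ) + 30) :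
    (∃ x' z' : ℤ, 2 * x' = x - 3 * z ∧ 2 * z' = x + z ∧
      x' ^ 2 + 2 * y ^ 2 + 3 * z' ^ 2 = 48 * (N : ℤ) + 30) ∧
    x ^ 2 + 2 * y ^ 2 + 3 * (-z) ^ 2 = 48 * (N : ℤ) + 30 := by
  constructor
  · have hsq : Even (x ^ 2 + z ^ 2) := by
      have : x ^ 2 + z ^ 2 = 48 * (N : ℤ) + 30 - 2 * y ^ 2 - 2 * z ^ 2 := by linarith
      rw [this]; exact ⟨24 * (N : ℤ) + 15 - y ^ 2 - z ^ 2, by ring⟩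
    have hxz : Even (x + z) := by
      simp only [Int.even_add, Int.even_pow] at hsq ⊢
      tauto
    obtain ⟨w, hw⟩ := hxz
    refine ⟨w - 2 * z, w, by omega, by omega, ?_⟩
    have h1 : 2 * (w - 2 * z) = x - 3 * z := by omega
    have h2 : 2 * w = x + z := by omega
    linear_combination h + (2 * w + x - z) * h2
  · linarith [sq_nonneg z, h, (by ring : (-z) ^ 2 = z ^ 2)]
end
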